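/- Let J ⊆ I ⊊ R be ideals of a Noetherian commutative ring R. Any minimal prime ℘ of the Aluffi algebra 𝒜_{R↠R/J}(I/J) on Rees_R(I) is either of the form p̃ = ⊕_{t≥0} (p ∩ I^t) u^t for some minimal prime p of R/J on R, or else has the form (q, ℘₊), where q := ℘ ∩ R contains a minimal prime of R/I on R and ℘₊ = ℘ ∩ Rees_R(I)₊ is the part of ℘ of positive degrees. -/

import Mathlib

open Polynomial

variable {R : Type*} [CommRing R]

/-- The defining ideal `(J, J̃)·Rees_R(I)` of the Aluffi algebra inside the Rees algebra. -/
noncomputable def aluffiIdeal (I J : Ideal R) : Ideal (reesAlgebra I) :=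
  Ideal.span {x : reesAlgebra I | ∃ a ∈ J, (x : R[X]) = C a ∨ (x : R[X]) = C a * X}

/-- The extended–contracted ideal `𝔭̃ = 𝔭R[u] ∩ Rees_R(I) = ⊕_{t≥0} (𝔭 ∩ I^t)u^t` of an
ideal `𝔭 ⊆ R` inside the Rees algebra of `I`. -/
noncomputable def tildeIdeal (I p : Ideal R) : Ideal (reesAlgebra I) :=
  Ideal.comap ((reesAlgebra I).val.toRingHom) (p.map (Polynomial.C : R →+* R[X]))

/-- The irrelevant ideal `Rees_R(I)₊` of elements of the Rees algebra with zero constant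
term (the positive-degree part). -/
noncomputable def reesPlus (I : Ideal R) : Ideal (reesAlgebra I) :=
  Ideal.comap ((reesAlgebra I).val.toRingHom)
    (RingHom.ker (Polynomial.evalRingHom (0 : R)))

namespace AluffiAux

variable (I : Ideal R)

theorem cxpow_mem {n : ℕ} {b : R} (hb : b ∈ I ^ n) :
    (C b * X ^ n : R[X]) ∈ reesAlgebra I := by
  rw [mem_reesAlgebra_iff]
  intro i
  rw [coeff_C_mul, coeff_X_pow]
  split_ifs with h
  · subst h; simpa using hb
  · simp

/-- The `n`-th homogeneous component of an element of the Rees algebra. -/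
noncomputable def rcomp (n : ℕ) (x : reesAlgebra I) : reesAlgebra I :=
  ⟨C ((x : R[X]).coeff n) * X ^ n, cxpow_mem I ((mem_reesAlgebra_iff I _).1 x.2 n)⟩

@[simp] theorem rcomp_coe (n : ℕ) (x : reesAlgebra I) :
    ((rcomp I n x : reesAlgebra I) : R[X]) = C ((x : R[X]).coeff n) * X ^ n := rfl

theorem sum_rcomp (x : reesAlgebra I) :
    ∑ n ∈ Finset.range (((x : R[X]).natDegree) + 1), rcomp I n x = x := by
  apply Subtype.ext
  rw [AddSubmonoidClass.coe_finset_sum]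
  simp only [rcomp_coe]
  exact (as_sum_range_C_mul_X_pow _).symm

theorem rcomp_add (n : ℕ) (x y : reesAlgebra I) :
    rcomp I n (x + y) = rcomp I n x + rcomp I n y := by
  apply Subtype.ext
  simp only [rcomp_coe, Subalgebra.coe_add, coeff_add, map_add, add_mul]

theorem rcomp_mul (n : ℕ) (x y : reesAlgebra I) :
    rcomp I n (x * y) =
      ∑ ij ∈ Finset.HasAntidiagonal.antidiagonal n, rcomp I ij.1 x * rcomp I ij.2 y := by
  apply Subtype.ext
  rw [AddSubmonoidClass.coe_finset_sum]
  show C (((x : R[X]) * (y : R[X])).coeff n) * X ^ n = _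
  rw [coeff_mul, map_sum, Finset.sum_mul]
  refine Finset.sum_congr rfl ?_
  rintro ⟨i, j⟩ hij
  rw [Finset.HasAntidiagonal.mem_antidiagonal] at hij
  push_cast
  simp only [rcomp_coe]
  rw [C_mul, ← hij, pow_add]
  ring

theorem mem_tilde {p : Ideal R} {x : reesAlgebra I} :
    x ∈ tildeIdeal I p ↔ ∀ n, (x : R[X]).coeff n ∈ p := by
  rw [tildeIdeal, Ideal.mem_comap]
  exact Ideal.mem_map_C_iff

theorem mem_reesPlus {x : reesAlgebra I} :
    x ∈ reesPlus I ↔ (x : R[X]).coeff 0 = 0 := by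
  rw [reesPlus, Ideal.mem_comap, RingHom.mem_ker, coeff_zero_eq_eval_zero]
  rfl

theorem tilde_isPrime {p : Ideal R} (hp : p.IsPrime) : (tildeIdeal I p).IsPrime := by
  haveI := @Ideal.isPrime_map_C_of_isPrime _ _ p hp
  exact Ideal.IsPrime.comap _

theorem aluffi_le_tilde {p J : Ideal R} (hJp : J ≤ p) :
    aluffiIdeal I J ≤ tildeIdeal I p := by
  rw [aluffiIdeal, Ideal.span_le]
  rintro x ⟨a, haJ, h | h⟩ <;> rw [SetLike.mem_coe, mem_tilde] <;> intro n <;> rw [h]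
  · rw [coeff_C]
    split_ifs
    · exact hJp haJ
    · exact p.zero_mem
  · rw [← pow_one (X : R[X]), C_mul_X_pow_eq_monomial, coeff_monomial]
    split_ifs
    · exact hJp haJ
    · exact p.zero_mem

/-- Minimal primes over the Aluffi ideal are homogeneous. -/
theorem homog_of_minimal {J : Ideal R} {P : Ideal (reesAlgebra I)}
    (hP : P ∈ (aluffiIdeal I J).minimalPrimes) : ∀ x ∈ P, ∀ n, rcomp I n x ∈ P := by
  classical
  obtain ⟨⟨hprime, hAP⟩, hmin⟩ := hP
  set Q : Ideal (reesAlgebra I) :=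
    { carrier := {x | ∀ n, rcomp I n x ∈ P}
      zero_mem' := by
        intro n
        have : rcomp I n (0 : reesAlgebra I) = 0 := Subtype.ext (by simp)
        rw [this]; exact P.zero_mem
      add_mem' := by
        intro x y hx hy n
        rw [rcomp_add]
        exact P.add_mem (hx n) (hy n)
      smul_mem' := by
        intro c x hx n
        rw [smul_eq_mul, rcomp_mul]
        exact Ideal.sum_mem _ fun ij _ => Ideal.mul_mem_left _ _ (hx ij.2) } with hQdef
  have hQP : Q ≤ P := by
    intro x hx
    rw [← sum_rcomp I x]
    exact Ideal.sum_mem _ fun n _ => hx n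
  have hAQ : aluffiIdeal I J ≤ Q := by
    rw [aluffiIdeal, Ideal.span_le]
    rintro x ⟨a, haJ, h | h⟩ <;> intro n
    · rcases n with _ | m
      · have : rcomp I 0 x = x := Subtype.ext (by simp [h])
        rw [this]
        exact hAP (Ideal.subset_span ⟨a, haJ, Or.inl h⟩)
      · have : rcomp I (m + 1) x = 0 := Subtype.ext (by simp [h, coeff_C])
        rw [this]; exact P.zero_mem
    · rcases n with _ | m
      · have : rcomp I 0 x = 0 := Subtype.ext (by
          simp only [rcomp_coe, h]
          rw [← pow_one (X : R[X]), C_mul_X_pow_eq_monomial, coeff_monomial]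
          simp)
        rw [this]; exact P.zero_mem
      · rcases m with _ | k
        · have : rcomp I 1 x = x := Subtype.ext (by
            simp only [rcomp_coe, h]
            rw [← pow_one (X : R[X]), C_mul_X_pow_eq_monomial, coeff_monomial]
            simp [← C_mul_X_pow_eq_monomial])
          rw [this]
          exact hAP (Ideal.subset_span ⟨a, haJ, Or.inr h⟩)
        · have : rcomp I (k + 2) x = 0 := Subtype.ext (by
            simp only [rcomp_coe, h]
            rw [← pow_one (X : R[X]), C_mul_X_pow_eq_monomial, coeff_monomial]
            simp)
          rw [this]; exact P.zero_mem
  have hQprime : Q.IsPrime := by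
    constructor
    · intro htop
      have h1 : (1 : reesAlgebra I) ∈ Q := htop ▸ Submodule.mem_top
      have : rcomp I 0 (1 : reesAlgebra I) = 1 := Subtype.ext (by simp)
      exact hprime.ne_top (Ideal.eq_top_of_isUnit_mem _ (this ▸ h1 0) isUnit_one)
    · intro x y hxy
      by_contra hcon
      push_neg at hcon
      obtain ⟨hx, hy⟩ := hcon
      have hex : ∃ n, rcomp I n x ∉ P := by
        by_contra h; push_neg at h; exact hx h
      have hey : ∃ n, rcomp I n y ∉ P := by
        by_contra h; push_neg at h; exact hy h
      set i := Nat.find hex with hi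
      set j := Nat.find hey with hj
      have hkey : rcomp I (i + j) (x * y) ∈ P := hxy (i + j)
      rw [rcomp_mul] at hkey
      have hmem : ((i, j) : ℕ × ℕ) ∈ Finset.HasAntidiagonal.antidiagonal (i + j) := by
        rw [Finset.HasAntidiagonal.mem_antidiagonal]
      rw [← Finset.add_sum_erase _ _ hmem] at hkey
      have hrest : ∑ ij ∈ (Finset.HasAntidiagonal.antidiagonal (i + j)).erase (i, j),
          rcomp I ij.1 x * rcomp I ij.2 y ∈ P := by
        refine Ideal.sum_mem _ ?_
        rintro ⟨a, b⟩ hab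
        rw [Finset.mem_erase, Finset.HasAntidiagonal.mem_antidiagonal] at hab
        obtain ⟨hne, hsum⟩ := hab
        rcases lt_or_ge a i with hlt | hge
        · exact Ideal.mul_mem_right _ _ (not_not.1 (Nat.find_min hex hlt))
        · have hbj : b < j := by
            rcases lt_or_eq_of_le hge with h' | h'
            · omega
            · exfalso; apply hne; subst h'; simp at hsum ⊢; omega
          exact Ideal.mul_mem_left _ _ (not_not.1 (Nat.find_min hey hbj))
      have : rcomp I i x * rcomp I j y ∈ P := by
        have := P.sub_mem hkey hrest
        simpa using this
      rcases hprime.mem_or_mem this with h | h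
      · exact Nat.find_spec hex h
      · exact Nat.find_spec hey h
  have : P ≤ Q := hmin ⟨hQprime, hAQ⟩ hQP
  exact fun x hx n => this hx n

end AluffiAux

open AluffiAux

/-- every minimal prime `℘` of the Aluffi algebra on `Rees_R(I)` (i.e.
minimal over the defining ideal `(J, J̃)Rees_R(I)`) is either of the form `p̃` for a
minimal prime `p` of `R/J` on `R`, or else `℘ = (q, ℘₊)` where `q = ℘ ∩ R` contains a
minimal prime of `R/I` on `R` and `℘₊ = ℘ ∩ Rees_R(I)₊`. -/
theorem aluffi_minimal_primes [IsNoetherianRing R]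
    (I J : Ideal R) (hJI : J ≤ I) (hI : I ≠ ⊤) :
    ∀ P ∈ (aluffiIdeal I J).minimalPrimes,
      (∃ p ∈ J.minimalPrimes, P = tildeIdeal I p) ∨
      ((∃ p ∈ I.minimalPrimes, p ≤ Ideal.comap (algebraMap R (reesAlgebra I)) P) ∧
        P = (Ideal.comap (algebraMap R (reesAlgebra I)) P).map
              (algebraMap R (reesAlgebra I)) ⊔ (P ⊓ reesPlus I)) := by
  intro P hP
  obtain ⟨⟨hprime, hAP⟩, hmin⟩ := hP
  have hhom := homog_of_minimal I (J := J) ⟨⟨hprime, hAP⟩, hmin⟩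
  set q : Ideal R := Ideal.comap (algebraMap R (reesAlgebra I)) P with hqdef
  haveI hqprime : q.IsPrime := Ideal.IsPrime.comap _
  have hJq : J ≤ q := by
    intro a ha
    rw [hqdef, Ideal.mem_comap]
    exact hAP (Ideal.subset_span ⟨a, ha, Or.inl rfl⟩)
  by_cases hIq : I ≤ q
  · right
    refine ⟨Ideal.exists_minimalPrimes_le hIq, le_antisymm ?_
      (sup_le (Ideal.map_le_iff_le_comap.2 le_rfl) inf_le_left)⟩
    intro x hx
    have h0 : rcomp I 0 x ∈ P := hhom x hx 0
    have e0 : rcomp I 0 x = algebraMap R (reesAlgebra I) ((x : R[X]).coeff 0) :=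
      Subtype.ext (by simp)
    rw [e0] at h0
    have hc : (x : R[X]).coeff 0 ∈ q := by rw [hqdef, Ideal.mem_comap]; exact h0
    have hx2 : x - algebraMap R (reesAlgebra I) ((x : R[X]).coeff 0) ∈ P ⊓ reesPlus I := by
      refine ⟨P.sub_mem hx h0, (mem_reesPlus I).2 ?_⟩
      push_cast
      simp
    have := Submodule.add_mem _
      (Submodule.mem_sup_left (Ideal.mem_map_of_mem (algebraMap R (reesAlgebra I)) hc))
      (Submodule.mem_sup_right hx2)
    simpa using this
  · left
    obtain ⟨a, haI, haq⟩ := SetLike.not_le_iff_exists.1 hIq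
    have haP : algebraMap R (reesAlgebra I) a ∉ P := by
      intro h
      exact haq (by rw [hqdef, Ideal.mem_comap]; exact h)
    set xa : reesAlgebra I := ⟨C a * X ^ 1, cxpow_mem I (by simpa using haI)⟩ with hxa
    have htP : tildeIdeal I q ≤ P := by
      intro x hx
      rw [mem_tilde] at hx
      rw [← sum_rcomp I x]
      refine Ideal.sum_mem _ fun n _ => ?_
      have key : algebraMap R (reesAlgebra I) (a ^ n) * rcomp I n x
          = algebraMap R (reesAlgebra I) ((x : R[X]).coeff n) * xa ^ n := by
        apply Subtype.ext
        push_cast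
        rw [Polynomial.algebraMap_eq, rcomp_coe]
        ring
      have hcP : algebraMap R (reesAlgebra I) ((x : R[X]).coeff n) ∈ P := hx n
      have : algebraMap R (reesAlgebra I) (a ^ n) * rcomp I n x ∈ P := by
        rw [key]; exact Ideal.mul_mem_right _ _ hcP
      rcases hprime.mem_or_mem this with h | h
      · exfalso
        rw [map_pow] at h
        exact haP (hprime.mem_of_pow_mem _ h)
      · exact h
    have hAt : aluffiIdeal I J ≤ tildeIdeal I q := aluffi_le_tilde I hJq
    have htprime : (tildeIdeal I q).IsPrime := tilde_isPrime I hqprime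
    have hPt : P ≤ tildeIdeal I q := hmin ⟨htprime, hAt⟩ htP
    have hPeq : P = tildeIdeal I q := le_antisymm hPt htP
    refine ⟨q, ⟨⟨hqprime, hJq⟩, ?_⟩, hPeq⟩
    intro p' hp' hle
    have h1 : tildeIdeal I p' ≤ tildeIdeal I q :=
      Ideal.comap_mono (Ideal.map_mono hle)
    have h3 : P ≤ tildeIdeal I p' :=
      hmin ⟨tilde_isPrime I hp'.1, aluffi_le_tilde I hp'.2⟩ (hPeq ▸ h1)
    intro r hrq
    have hrP : algebraMap R (reesAlgebra I) r ∈ P := by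
      rw [hqdef, Ideal.mem_comap] at hrq; exact hrq
    have := (mem_tilde I).1 (h3 hrP) 0
    simpa [coeff_C] using this
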